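/- Assume f satisfies (f0)–(f4). Then for every real t ≠ 0 one has f(t)·t > p_*·F(t) > 0. (This is Lemma 2.3 of the paper.) -/

import Mathlib

open Filter Set MeasureTheory

/-- If `h` is strictly increasing up to `t` on `(0, t]` and tends to `0` at `0⁺`,
then `h t > 0`. -/
private lemma pos_at_of_mono (h : ℝ → ℝ) (t : ℝ) (ht : 0 < t)
    (hmono : ∀ r s : ℝ, 0 < r → r < s → s ≤ t → h r < h s)
    (hlim : Tendsto h (nhdsWithin 0 (Ioi 0)) (nhds 0)) : 0 < h t := by
  have hs : 0 < t / 2 := by linarith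
  have hnn : 0 ≤ h (t / 2) := by
    refine le_of_tendsto hlim ?_
    filter_upwards [Ioo_mem_nhdsGT_of_mem (⟨le_refl 0, hs⟩ : (0:ℝ) ∈ Ico 0 (t/2))] with r hr
    exact (hmono r (t/2) hr.1 hr.2 (by linarith)).le
  exact lt_of_le_of_lt hnn (hmono (t/2) t hs (by linarith) le_rfl)

/-- Core lemma on the positive half-line. -/
private lemma key_pos (q : ℝ) (hq : 2 < q) (f F Ft : ℝ → ℝ) (hf0 : Continuous f)
    (hF : ∀ t : ℝ, F t = ∫ s in (0:ℝ)..t, f s)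
    (hFt : ∀ t : ℝ, Ft t = f t * t - 2 * F t)
    (hf1 : Tendsto (fun t : ℝ => f t / |t| ^ (q - 1)) (nhdsWithin 0 {0}ᶜ) (nhds 0))
    (hf4 : StrictMonoOn (fun t : ℝ => Ft t / |t| ^ q) (Ioi 0)) :
    ∀ t : ℝ, 0 < t → f t * t > q * F t ∧ q * F t > 0 := by
  have hq0 : (0:ℝ) < q := by linarith
  have hq2 : (0:ℝ) < q - 2 := by linarith
  have hq1 : (0:ℝ) < q - 1 := by linarith
  -- F has derivative f everywhere
  have hder : ∀ x : ℝ, HasDerivAt F (f x) x := by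
    intro x
    have : HasDerivAt (fun u : ℝ => ∫ s in (0:ℝ)..u, f s) (f x) x :=
      (intervalIntegral.integral_hasStrictDerivAt_right (hf0.intervalIntegrable 0 x)
        (hf0.stronglyMeasurableAtFilter volume (nhds x))
        hf0.continuousAt).hasDerivAt
    exact this.congr_deriv rfl |>.congr_of_eventuallyEq (by filter_upwards with u using (hF u))
  have hF0 : F 0 = 0 := by rw [hF]; simp
  -- |t|^(q-1) tends to 0 at 0
  have habs : Tendsto (fun t : ℝ => |t| ^ (q - 1)) (nhds 0) (nhds 0) := by
    have h1 : Continuous fun t : ℝ => |t| ^ (q - 1) :=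
      (Real.continuous_rpow_const hq1.le).comp continuous_abs
    have := h1.tendsto 0
    simpa [Real.zero_rpow hq1.ne'] using this
  -- f 0 = 0
  have hf00 : f 0 = 0 := by
    have h1 : Tendsto f (nhdsWithin 0 {0}ᶜ) (nhds 0) := by
      have h2 := hf1.mul (habs.mono_left nhdsWithin_le_nhds)
      rw [mul_zero] at h2
      refine h2.congr' ?_
      filter_upwards [self_mem_nhdsWithin] with t (htne : t ≠ 0)
      have : |t| ^ (q-1) ≠ 0 := by
        positivity
      field_simp
    have h2 : Tendsto f (nhdsWithin 0 {0}ᶜ) (nhds (f 0)) :=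
      (hf0.tendsto 0).mono_left nhdsWithin_le_nhds
    exact (tendsto_nhds_unique h2 h1).symm ▸ rfl
  -- main small-scale estimate : F s / s^q → 0 as s → 0⁺
  have L1 : Tendsto (fun s : ℝ => F s / s ^ q) (nhdsWithin 0 (Ioi 0)) (nhds 0) := by
    rw [Metric.tendsto_nhdsWithin_nhds]
    intro ε hε
    rw [Metric.tendsto_nhdsWithin_nhds] at hf1
    obtain ⟨δ, hδ, H⟩ := hf1 (ε/2) (by linarith)
    refine ⟨δ, hδ, ?_⟩
    intro s hs hsd
    have hs0 : 0 < s := hs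
    rw [Real.dist_eq, sub_zero] at hsd ⊢
    have hsq : (0:ℝ) < s ^ q := Real.rpow_pos_of_pos hs0 q
    -- pointwise bound |f u| ≤ ε/2 * u^(q-1) on [0, s]
    have hbound : ∀ u ∈ Icc (0:ℝ) s, |f u| ≤ ε/2 * u ^ (q-1) := by
      intro u hu
      rcases eq_or_lt_of_le hu.1 with rfl | hu0
      · simp [hf00, Real.zero_rpow hq1.ne']
      · have hune : u ∈ ({0}ᶜ : Set ℝ) := (ne_of_gt hu0)
        have hud : dist u 0 < δ := by
          rw [Real.dist_eq, sub_zero, abs_of_pos hu0]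
          calc u ≤ s := hu.2
            _ < δ := by rwa [abs_of_pos hs0] at hsd
        have := H hune hud
        rw [Real.dist_eq, sub_zero, abs_div, abs_of_pos hu0] at this
        have hupos : (0:ℝ) < u ^ (q-1) := Real.rpow_pos_of_pos hu0 _
        rw [abs_of_pos hupos] at this
        have := (div_lt_iff₀ hupos).mp this
        linarith
    have hint1 : IntervalIntegrable (fun u => |f u|) volume 0 s :=
      (hf0.abs).intervalIntegrable 0 s
    have hint2 : IntervalIntegrable (fun u : ℝ => ε/2 * u ^ (q-1)) volume 0 s :=
      (continuous_const.mul (Real.continuous_rpow_const hq1.le)).intervalIntegrable 0 s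
    have hFb : |F s| ≤ ε/2 * (s ^ q / q) := by
      rw [hF]
      calc |∫ u in (0:ℝ)..s, f u| ≤ ∫ u in (0:ℝ)..s, |f u| := by
            simpa [Real.norm_eq_abs] using
              intervalIntegral.norm_integral_le_integral_norm (μ := volume) (f := f) hs0.le
        _ ≤ ∫ u in (0:ℝ)..s, ε/2 * u ^ (q-1) :=
            intervalIntegral.integral_mono_on hs0.le hint1 hint2 hbound
        _ = ε/2 * ∫ u in (0:ℝ)..s, u ^ (q-1) := by
            rw [intervalIntegral.integral_const_mul]
        _ = ε/2 * (s ^ q / q) := by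
            rw [integral_rpow (Or.inl (by linarith : (-1:ℝ) < q - 1))]
            rw [show q - 1 + 1 = q by ring, Real.zero_rpow hq0.ne']
            ring_nf
    have : |F s / s ^ q| ≤ ε/2 * (1/q) := by
      rw [abs_div, abs_of_pos hsq, div_le_iff₀ hsq]
      calc |F s| ≤ ε/2 * (s ^ q / q) := hFb
        _ = ε/2 * (1/q) * s ^ q := by ring
    have hq1' : (1:ℝ)/q < 1 := by
      rw [div_lt_one hq0]; linarith
    calc |F s / s ^ q| ≤ ε/2 * (1/q) := this
      _ < ε := by nlinarith
  -- restriction of hf1 to the right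
  have hf1' : Tendsto (fun s : ℝ => f s / s ^ (q - 1)) (nhdsWithin 0 (Ioi 0)) (nhds 0) := by
    refine (hf1.mono_left (nhdsWithin_mono 0 ?_)).congr' ?_
    · intro x hx; exact ne_of_gt hx
    · filter_upwards [self_mem_nhdsWithin] with s (hs : (0:ℝ) < s)
      rw [abs_of_pos hs]
  -- Ft s / s^q → 0 as s → 0⁺
  have L2 : Tendsto (fun s : ℝ => Ft s / s ^ q) (nhdsWithin 0 (Ioi 0)) (nhds 0) := by
    have h2 : Tendsto (fun s : ℝ => f s / s ^ (q-1) - 2 * (F s / s ^ q))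
        (nhdsWithin 0 (Ioi 0)) (nhds 0) := by
      simpa using hf1'.sub ((L1.const_mul (2:ℝ)))
    refine h2.congr' ?_
    filter_upwards [self_mem_nhdsWithin] with s (hs : (0:ℝ) < s)
    have hsq : (0:ℝ) < s ^ q := Real.rpow_pos_of_pos hs q
    have hsq1 : (0:ℝ) < s ^ (q-1) := Real.rpow_pos_of_pos hs _
    have hmul : s ^ (q-1) * s = s ^ q := by
      have h := Real.rpow_add hs (q-1) 1
      rw [Real.rpow_one, show q - 1 + 1 = q by ring] at h
      exact h.symm
    have h3 : f s * s / s ^ q = f s / s ^ (q-1) := by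
      rw [← hmul, mul_div_mul_right _ _ hs.ne']
    rw [hFt, sub_div, h3]
    ring
  -- strict monotonicity of Ft s / s^q (without abs)
  have hf4' : StrictMonoOn (fun s : ℝ => Ft s / s ^ q) (Ioi 0) := by
    intro a ha b hb hab
    have := hf4 ha hb hab
    simpa [abs_of_pos (show (0:ℝ) < a from ha), abs_of_pos (show (0:ℝ) < b from hb)] using this
  -- Ft is positive on (0, ∞)
  have hFt_pos : ∀ s : ℝ, 0 < s → 0 < Ft s := by
    intro s hs
    have h1 : 0 < Ft s / s ^ q := by
      refine pos_at_of_mono _ s hs ?_ L2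
      intro r u hr hru hut
      exact hf4' (by exact hr) (by exact lt_trans hr hru) hru
    have hsq : (0:ℝ) < s ^ q := Real.rpow_pos_of_pos hs q
    have := mul_pos h1 hsq
    rwa [div_mul_cancel₀ _ hsq.ne'] at this
  -- derivative of G a = F a * a^(-2)
  have hGder : ∀ a : ℝ, 0 < a →
      HasDerivAt (fun a : ℝ => F a * a ^ (-2:ℝ)) (Ft a * a ^ (-3:ℝ)) a := by
    intro a ha
    have h1 : HasDerivAt (fun a : ℝ => a ^ (-2:ℝ)) ((-2) * a ^ ((-2) - 1 : ℝ)) a :=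
      Real.hasDerivAt_rpow_const (Or.inl ha.ne')
    have h2 := (hder a).mul h1
    have he : a ^ (-2:ℝ) = a * a ^ (-3:ℝ) := by
      rw [show (-2:ℝ) = 1 + (-3) by norm_num, Real.rpow_add ha, Real.rpow_one]
    refine h2.congr_deriv ?_
    symm
    rw [hFt, show ((-2:ℝ) - 1) = -3 by norm_num, he]
    ring
  have hGcont : ∀ a ∈ Ioi (0:ℝ), ContinuousWithinAt (fun a : ℝ => F a * a ^ (-2:ℝ)) (Ioi 0) a :=
    fun a ha => ((hGder a ha).continuousAt).continuousWithinAt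
  have hGmono : StrictMonoOn (fun a : ℝ => F a * a ^ (-2:ℝ)) (Ioi 0) := by
    refine strictMonoOn_of_deriv_pos (convex_Ioi 0) (fun a ha => hGcont a ha) ?_
    intro a ha
    rw [interior_Ioi] at ha
    rw [(hGder a ha).deriv]
    exact mul_pos (hFt_pos a ha) (Real.rpow_pos_of_pos ha _)
  -- G tends to 0 at 0⁺
  have hrpow_lim : ∀ r : ℝ, 0 < r →
      Tendsto (fun s : ℝ => s ^ r) (nhdsWithin 0 (Ioi 0)) (nhds 0) := by
    intro r hr
    have h1 : ContinuousAt (fun s : ℝ => s ^ r) 0 :=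
      Real.continuousAt_rpow_const 0 r (Or.inr hr.le)
    have := h1.tendsto.mono_left (nhdsWithin_le_nhds (s := Ioi (0:ℝ)))
    simpa [Real.zero_rpow hr.ne'] using this
  have hGlim : Tendsto (fun s : ℝ => F s * s ^ (-2:ℝ)) (nhdsWithin 0 (Ioi 0)) (nhds 0) := by
    have h2 := L1.mul (hrpow_lim (q-2) hq2)
    rw [mul_zero] at h2
    refine h2.congr' ?_
    filter_upwards [self_mem_nhdsWithin] with s (hs : (0:ℝ) < s)
    have hsq : (0:ℝ) < s ^ q := Real.rpow_pos_of_pos hs q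
    have hmul : s ^ (q-2) / s ^ q = s ^ (-2:ℝ) := by
      rw [← Real.rpow_sub hs, show q - 2 - q = -2 by ring]
    calc F s / s ^ q * s ^ (q-2) = F s * (s ^ (q-2) / s ^ q) := by ring
      _ = F s * s ^ (-2:ℝ) := by rw [hmul]
  -- conclusion
  intro t ht
  -- positivity of F t
  have hFpos : 0 < F t := by
    have h1 : 0 < F t * t ^ (-2:ℝ) := by
      refine pos_at_of_mono _ t ht ?_ hGlim
      intro r u hr hru hut
      exact hGmono (by exact hr) (by exact lt_trans hr hru) hru
    have h2 : (0:ℝ) < t ^ (2:ℝ) := Real.rpow_pos_of_pos ht _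
    have h3 := mul_pos h1 h2
    rwa [mul_assoc, ← Real.rpow_add ht, show (-2:ℝ) + 2 = 0 by ring, Real.rpow_zero,
      mul_one] at h3
  -- the comparison function Φ
  set c : ℝ := Ft t / t ^ q with hc
  set Φ : ℝ → ℝ := fun a => F a * a ^ (-2:ℝ) - c/(q-2) * a ^ (q-2) with hΦ
  have hΦder : ∀ a : ℝ, 0 < a →
      HasDerivAt Φ (Ft a * a ^ (-3:ℝ) - c * a ^ (q-3)) a := by
    intro a ha
    have h1 : HasDerivAt (fun a : ℝ => a ^ (q-2)) ((q-2) * a ^ (q-2-1)) a :=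
      Real.hasDerivAt_rpow_const (Or.inl ha.ne')
    have h2 := (hGder a ha).sub (h1.const_mul (c/(q-2)))
    refine h2.congr_deriv ?_
    symm
    rw [show q - 2 - 1 = q - 3 by ring]
    field_simp
  have hΦanti : StrictAntiOn Φ (Ioc 0 t) := by
    refine strictAntiOn_of_deriv_neg (convex_Ioc 0 t)
      (fun a ha => ((hΦder a ha.1).continuousAt).continuousWithinAt) ?_
    intro a ha
    rw [interior_Ioc] at ha
    rw [(hΦder a ha.1).deriv]
    have hlt : Ft a / a ^ q < c := hf4' (by exact ha.1) (by exact lt_trans ha.1 ha.2) ha.2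
    have haq3 : (0:ℝ) < a ^ (q-3) := Real.rpow_pos_of_pos ha.1 _
    have heq : Ft a * a ^ (-3:ℝ) = (Ft a / a ^ q) * a ^ (q-3) := by
      rw [div_mul_eq_mul_div, mul_div_assoc, ← Real.rpow_sub ha.1,
        show q - 3 - q = -3 by ring]
    rw [heq, sub_neg]
    exact mul_lt_mul_of_pos_right hlt haq3
  have hΦlim : Tendsto Φ (nhdsWithin 0 (Ioi 0)) (nhds 0) := by
    have h2 : Tendsto (fun s : ℝ => F s * s ^ (-2:ℝ) - c/(q-2) * s ^ (q-2))
        (nhdsWithin 0 (Ioi 0)) (nhds 0) := by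
      simpa using hGlim.sub ((hrpow_lim (q-2) hq2).const_mul (c/(q-2)))
    exact h2
  have hΦneg : Φ t < 0 := by
    have h1 : 0 < -Φ t := by
      refine pos_at_of_mono (fun a => -Φ a) t ht ?_ (by simpa using hΦlim.neg)
      intro r u hr hru hut
      have h := hΦanti (⟨hr, hru.le.trans hut⟩ : r ∈ Ioc 0 t)
        (⟨lt_trans hr hru, hut⟩ : u ∈ Ioc 0 t) hru
      show -Φ r < -Φ u
      linarith
    linarith
  -- unpack Φ t < 0
  have ht2 : (0:ℝ) < t ^ (2:ℝ) := Real.rpow_pos_of_pos ht _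
  have htq : (0:ℝ) < t ^ q := Real.rpow_pos_of_pos ht q
  have hkey : (q - 2) * F t < Ft t := by
    have h1 : F t * t ^ (-2:ℝ) < c/(q-2) * t ^ (q-2) := by
      have := hΦneg; simp only [hΦ] at this; linarith
    have h2 := mul_lt_mul_of_pos_right h1 ht2
    rw [mul_assoc, ← Real.rpow_add ht, show (-2:ℝ) + 2 = 0 by ring, Real.rpow_zero,
      mul_one, mul_assoc, ← Real.rpow_add ht, show q - 2 + 2 = q by ring] at h2
    have h3 : c / (q-2) * t ^ q = Ft t / (q-2) := by
      rw [hc]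
      field_simp
    rw [h3] at h2
    calc (q-2) * F t < (q-2) * (Ft t / (q-2)) := by
          exact mul_lt_mul_of_pos_left h2 hq2
      _ = Ft t := by field_simp
  constructor
  · have := hFt t; nlinarith [hkey]
  · exact mul_pos hq0 hFpos

theorem stmt_0 (N : ℕ) (hN : 3 ≤ N) (p : ℝ) (hp2 : 2 ≤ p) (hpN : p < (N : ℝ))
    (f F Ft : ℝ → ℝ) (hf0 : Continuous f)
    (hF : ∀ t : ℝ, F t = ∫ s in (0:ℝ)..t, f s)
    (hFt : ∀ t : ℝ, Ft t = f t * t - 2 * F t)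
    (hf1 : Tendsto (fun t : ℝ => f t / |t| ^ (p + 2 * p / (N : ℝ) - 1)) (nhdsWithin 0 {0}ᶜ) (nhds 0))
    (hf2 : Tendsto (fun t : ℝ => f t / |t| ^ ((N : ℝ) * p / ((N : ℝ) - p) - 1)) (cocompact ℝ) (nhds 0))
    (hf3 : Tendsto (fun t : ℝ => F t / |t| ^ (p + 2 * p / (N : ℝ))) (cocompact ℝ) atTop)
    (hf4a : StrictAntiOn (fun t : ℝ => Ft t / |t| ^ (p + 2 * p / (N : ℝ))) (Iio 0))
    (hf4b : StrictMonoOn (fun t : ℝ => Ft t / |t| ^ (p + 2 * p / (N : ℝ))) (Ioi 0)) :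
    ∀ t : ℝ, t ≠ 0 → f t * t > (p + 2 * p / (N : ℝ)) * F t ∧ (p + 2 * p / (N : ℝ)) * F t > 0 := by
  set q : ℝ := p + 2 * p / (N : ℝ) with hqdef
  have hN0 : (0:ℝ) < (N : ℝ) := by positivity
  have hq : 2 < q := by
    have h1 : 0 < 2 * p / (N : ℝ) := by positivity
    simp only [hqdef]; linarith
  intro t ht
  rcases lt_or_gt_of_ne ht with htneg | htpos
  · -- negative case: reflect
    set f' : ℝ → ℝ := fun s => -f (-s) with hf'def
    set F' : ℝ → ℝ := fun s => F (-s) with hF'def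
    set Ft' : ℝ → ℝ := fun s => Ft (-s) with hFt'def
    have hf0' : Continuous f' := (hf0.comp continuous_neg).neg
    have hF' : ∀ s : ℝ, F' s = ∫ u in (0:ℝ)..s, f' u := by
      intro s
      have h1 : (∫ u in (0:ℝ)..s, f (-u)) = ∫ u in (-s)..(0:ℝ), f u := by
        simpa using intervalIntegral.integral_comp_neg (a := (0:ℝ)) (b := s) (f := f)
      have h2 : (∫ u in (-s)..(0:ℝ), f u) = -∫ u in (0:ℝ)..(-s), f u :=
        intervalIntegral.integral_symm 0 (-s)
      simp only [hF'def, hf'def]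
      rw [intervalIntegral.integral_neg, h1, h2, neg_neg, hF]
    have hFt' : ∀ s : ℝ, Ft' s = f' s * s - 2 * F' s := by
      intro s
      simp only [hFt'def, hf'def, hF'def, hFt (-s)]
      ring
    have hnegmap : Tendsto (fun x : ℝ => -x) (nhdsWithin 0 {0}ᶜ) (nhdsWithin 0 ({0}ᶜ : Set ℝ)) := by
      apply tendsto_nhdsWithin_of_tendsto_nhds_of_eventually_within
      · have := (continuous_neg.tendsto (0:ℝ)).mono_left
          (nhdsWithin_le_nhds (s := ({0}ᶜ : Set ℝ)))
        simpa using this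
      · filter_upwards [self_mem_nhdsWithin] with x (hx : x ≠ 0)
        simpa using hx
    have hf1' : Tendsto (fun s : ℝ => f' s / |s| ^ (q - 1)) (nhdsWithin 0 {0}ᶜ) (nhds 0) := by
      have h1 := (hf1.comp hnegmap).neg
      rw [neg_zero] at h1
      refine h1.congr ?_
      intro x
      simp only [Function.comp, hf'def, abs_neg, neg_div]
    have hf4' : StrictMonoOn (fun s : ℝ => Ft' s / |s| ^ q) (Ioi 0) := by
      intro a ha b hb hab
      have h1 := hf4a (show -b ∈ Iio (0:ℝ) by simpa using (lt_trans ha hab : (0:ℝ) < b))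
        (show -a ∈ Iio (0:ℝ) by simpa using (ha : (0:ℝ) < a)) (by linarith)
      simpa only [hFt'def, abs_neg, neg_neg] using h1
    have := key_pos q hq f' F' Ft' hf0' hF' hFt' hf1' hf4' (-t) (by linarith)
    simp only [hf'def, hF'def, neg_neg] at this
    constructor
    · have h1 := this.1; linarith [h1]
    · exact this.2
  · exact key_pos q hq f F Ft hf0 hF hFt hf1 hf4b t htpos
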